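/- Let a : [0,T] → ℝ be continuous. Then lim_{ε → 0+} ε log( e^{a(t)/ε} ∫_0^t e^{−2a(s)/ε} ds ) = a(t) − 2 inf_{0 ≤ s ≤ t} a(s) for every t ∈ (0,T]. In other words, the transformation φ ↦ φ(t)∫_0^t φ(s)^{−2} ds is a geometric lifting of the one-dimensional Pitman transform. -/

import Mathlib

open Set Filter MeasureTheory


lemma laplace_limit (t : ℝ) (ht : 0 < t) (f : ℝ → ℝ) (hf : ContinuousOn f (Set.Icc 0 t)) :
    Filter.Tendsto (fun ε : ℝ => ε * Real.log (∫ s in (0:ℝ)..t, Real.exp (f s / ε)))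
      (nhdsWithin 0 (Set.Ioi 0)) (nhds (sSup (f '' Set.Icc 0 t))) := by
  obtain ⟨x₀, hx₀, hx₀max⟩ := isCompact_Icc.exists_isMaxOn (nonempty_Icc.2 ht.le) hf
  have hbdd : ∀ s ∈ Icc 0 t, f s ≤ f x₀ := hx₀max
  have hM : sSup (f '' Icc 0 t) = f x₀ :=
    IsGreatest.csSup_eq ⟨mem_image_of_mem _ hx₀, fun y ⟨s, hs, hsy⟩ => hsy ▸ hbdd s hs⟩
  rw [hM]
  -- integrability facts
  have hcont : ∀ ε : ℝ, ContinuousOn (fun s => Real.exp (f s / ε)) (Icc 0 t) :=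
    fun ε => Real.continuous_exp.comp_continuousOn (hf.div_const ε)
  have hint : ∀ ε : ℝ, IntervalIntegrable (fun s => Real.exp (f s / ε)) volume 0 t :=
    fun ε => (hcont ε).intervalIntegrable_of_Icc ht.le
  have hgpos : ∀ ε : ℝ, 0 < ∫ s in (0:ℝ)..t, Real.exp (f s / ε) := fun ε =>
    intervalIntegral.intervalIntegral_pos_of_pos (hint ε) (fun s => Real.exp_pos _) ht
  -- upper bound
  have hup : ∀ ε : ℝ, 0 < ε →
      ε * Real.log (∫ s in (0:ℝ)..t, Real.exp (f s / ε)) ≤ ε * Real.log t + f x₀ := by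
    intro ε hε
    have h1 : (∫ s in (0:ℝ)..t, Real.exp (f s / ε)) ≤ t * Real.exp (f x₀ / ε) := by
      have := intervalIntegral.integral_mono_on (μ := volume) ht.le (hint ε)
        (intervalIntegrable_const) (fun s hs =>
          Real.exp_le_exp.2 (div_le_div_of_nonneg_right (hbdd s hs) hε.le))
      simpa using this
    have h2 := Real.log_le_log (hgpos ε) h1
    rw [Real.log_mul (ne_of_gt ht) (Real.exp_ne_zero _), Real.log_exp] at h2
    calc ε * Real.log (∫ s in (0:ℝ)..t, Real.exp (f s / ε))
        ≤ ε * (Real.log t + f x₀ / ε) := by nlinarith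
      _ = ε * Real.log t + f x₀ := by field_simp
  rw [Metric.tendsto_nhds]
  intro δ hδ
  -- lower bound: find a subinterval where f is close to its max
  have hcx : ContinuousWithinAt f (Icc 0 t) x₀ := hf x₀ hx₀
  have hev : ∀ᶠ s in nhdsWithin x₀ (Icc 0 t), f x₀ - δ/4 < f s :=
    hcx.eventually (eventually_gt_nhds (by linarith))
  obtain ⟨r, hr, hball⟩ := Metric.mem_nhdsWithin_iff.1 hev
  set u := max 0 (x₀ - r/2) with hu
  set v := min t (x₀ + r/2) with hv
  have hu0 : 0 ≤ u := le_max_left _ _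
  have hvt : v ≤ t := min_le_left _ _
  have huv : u < v := by
    rcases hx₀ with ⟨h0x, hxt⟩
    apply max_lt <;> apply lt_min <;> linarith
  have hsub : ∀ s ∈ Icc u v, f x₀ - δ/4 < f s := by
    intro s ⟨hsu, hsv⟩
    apply hball
    constructor
    · rw [Metric.mem_ball, Real.dist_eq, abs_sub_lt_iff]
      have h1 : x₀ - r/2 ≤ s := le_trans (le_max_right _ _) hsu
      have h2 : s ≤ x₀ + r/2 := le_trans hsv (min_le_right _ _)
      constructor <;> linarith
    · exact ⟨le_trans hu0 hsu, le_trans hsv hvt⟩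
  have hlow : ∀ ε : ℝ, 0 < ε →
      ε * Real.log (v - u) + (f x₀ - δ/4) ≤
        ε * Real.log (∫ s in (0:ℝ)..t, Real.exp (f s / ε)) := by
    intro ε hε
    have hintuv : IntervalIntegrable (fun s => Real.exp (f s / ε)) volume u v :=
      (hint ε).mono_set (by rw [uIcc_of_le huv.le, uIcc_of_le ht.le]; exact Icc_subset_Icc hu0 hvt)
    have h1 : (v - u) * Real.exp ((f x₀ - δ/4) / ε) ≤ ∫ s in u..v, Real.exp (f s / ε) := by
      have := intervalIntegral.integral_mono_on (μ := volume) huv.le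
        (intervalIntegrable_const) hintuv (fun s hs =>
          Real.exp_le_exp.2 (div_le_div_of_nonneg_right (hsub s hs).le hε.le))
      simpa using this
    have h2 : (∫ s in u..v, Real.exp (f s / ε)) ≤ ∫ s in (0:ℝ)..t, Real.exp (f s / ε) :=
      intervalIntegral.integral_mono_interval hu0 huv.le hvt
        (Filter.Eventually.of_forall fun s => (Real.exp_pos _).le) (hint ε)
    have h3 := Real.log_le_log (mul_pos (by linarith) (Real.exp_pos _)) (h1.trans h2)
    rw [Real.log_mul (by linarith) (Real.exp_ne_zero _), Real.log_exp] at h3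
    calc ε * Real.log (v - u) + (f x₀ - δ/4)
        = ε * (Real.log (v - u) + (f x₀ - δ/4) / ε) := by field_simp
      _ ≤ ε * Real.log (∫ s in (0:ℝ)..t, Real.exp (f s / ε)) := by nlinarith
  -- the small error terms tend to 0
  have htends : ∀ c : ℝ, Filter.Tendsto (fun ε : ℝ => ε * c)
      (nhdsWithin 0 (Set.Ioi 0)) (nhds 0) := by
    intro c
    simpa using ((tendsto_id.mono_left nhdsWithin_le_nhds).mul_const c :
      Tendsto (fun ε : ℝ => ε * c) (nhdsWithin 0 (Set.Ioi 0)) (nhds (0 * c)))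
  have e1 := (htends (Real.log t)).eventually (eventually_abs_sub_lt 0 (by linarith : (0:ℝ) < δ))
  have e2 := (htends (Real.log (v - u))).eventually
    (eventually_abs_sub_lt 0 (by linarith : (0:ℝ) < δ/2))
  filter_upwards [e1, e2, self_mem_nhdsWithin] with ε h1 h2 hε
  rw [sub_zero] at h1 h2
  rw [Real.dist_eq, abs_sub_lt_iff]
  have hεpos : 0 < ε := hε
  have hb1 := hup ε hεpos
  have hb2 := hlow ε hεpos
  rw [abs_lt] at h1 h2
  constructor <;> [linarith; linarith]


/-- Laplace-method limit: for continuous `a : [0,T] → ℝ` and `t ∈ (0,T]`,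
`lim_{ε→0+} ε log( e^{a(t)/ε} ∫_0^t e^{−2a(s)/ε} ds ) = a(t) − 2 inf_{0≤s≤t} a(s)`,
i.e. `φ ↦ φ(t)∫_0^t φ(s)^{−2} ds` is a geometric lifting of the 1-dim Pitman transform. -/
theorem geometric_lifting_pitman (T : ℝ) (a : ℝ → ℝ)
    (ha : ContinuousOn a (Set.Icc 0 T)) (t : ℝ) (ht : t ∈ Set.Ioc 0 T) :
    Filter.Tendsto
      (fun ε : ℝ => ε * Real.log (Real.exp (a t / ε) *
        ∫ s in (0:ℝ)..t, Real.exp (-2 * a s / ε)))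
      (nhdsWithin 0 (Set.Ioi 0))
      (nhds (a t - 2 * sInf (a '' Set.Icc 0 t))) := by
  obtain ⟨ht0, htT⟩ := ht
  have ha' : ContinuousOn a (Icc 0 t) := ha.mono (Icc_subset_Icc le_rfl htT)
  have hf : ContinuousOn (fun s => -2 * a s) (Icc 0 t) := continuousOn_const.mul ha'
  -- identify the sup of -2a with -2 times the inf of a
  obtain ⟨x₀, hx₀, hx₀min⟩ := isCompact_Icc.exists_isMinOn (nonempty_Icc.2 ht0.le) ha'
  have hbdd : ∀ s ∈ Icc 0 t, a x₀ ≤ a s := hx₀min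
  have hInf : sInf (a '' Icc 0 t) = a x₀ :=
    IsLeast.csInf_eq ⟨mem_image_of_mem _ hx₀, fun y ⟨s, hs, hsy⟩ => hsy ▸ hbdd s hs⟩
  have hSup : sSup ((fun s => -2 * a s) '' Icc 0 t) = -2 * a x₀ :=
    IsGreatest.csSup_eq ⟨mem_image_of_mem _ hx₀,
      fun y ⟨s, hs, hsy⟩ => by simp only [← hsy]; nlinarith [hbdd s hs]⟩
  have hL := laplace_limit t ht0 (fun s => -2 * a s) hf
  rw [hSup] at hL
  have h2 : Filter.Tendsto
      (fun ε : ℝ => a t + ε * Real.log (∫ s in (0:ℝ)..t, Real.exp (-2 * a s / ε)))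
      (nhdsWithin 0 (Set.Ioi 0)) (nhds (a t + -2 * a x₀)) := tendsto_const_nhds.add hL
  have hgpos : ∀ ε : ℝ, 0 < ∫ s in (0:ℝ)..t, Real.exp (-2 * a s / ε) := fun ε =>
    intervalIntegral.intervalIntegral_pos_of_pos
      ((Real.continuous_exp.comp_continuousOn (hf.div_const ε)).intervalIntegrable_of_Icc ht0.le)
      (fun s => Real.exp_pos _) ht0
  have heq : ∀ᶠ ε in nhdsWithin (0:ℝ) (Set.Ioi 0),
      a t + ε * Real.log (∫ s in (0:ℝ)..t, Real.exp (-2 * a s / ε)) =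
      ε * Real.log (Real.exp (a t / ε) * ∫ s in (0:ℝ)..t, Real.exp (-2 * a s / ε)) := by
    filter_upwards [self_mem_nhdsWithin] with ε hε
    have hεpos : (0:ℝ) < ε := hε
    rw [Real.log_mul (Real.exp_ne_zero _) (ne_of_gt (hgpos ε)), Real.log_exp]
    field_simp
  have := h2.congr' heq
  convert this using 2
  rw [hInf]
  ring
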